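/- Let ν: [0,1]² → ℝ be defined by ν(x) = g(x₁) + h(x₂) where g, h are square-integrable functions, and let X = (X₁, X₂) be a random vector on [0,1]² with density bounded between positive constants. If {ν^{(∅)}, ν^{(1)}, ν^{(2)}, ν^{(1,2)}} is the Hoeffding decomposition of ν(X) (the unique decomposition satisfying E[ν^{(J)}(X^{(J)}) | X^{(I)}] = 0 for all proper subsets I ⊊ J), then the interaction component ν^{(1,2)}(X₁, X₂) = 0 almost surely. -/

import Mathlib

open MeasureTheory

/-- Helper: L2 × L2 → integrable product. -/
lemma l2_mul_integrable {Ω : Type*} [MeasurableSpace Ω] {P : Measure Ω}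
    {u v : Ω → ℝ} (hu : MemLp u 2 P) (hv : MemLp v 2 P) :
    Integrable (fun ω => u ω * v ω) P := by
  have h1 : (1 : ENNReal) / 1 = 1 / 2 + 1 / 2 := by
    rw [ENNReal.div_add_div_same]; norm_num; rw [ENNReal.div_self] <;> norm_num
  have := hu.smul (𝕜 := ℝ) hv (r := 1)
  rw [memLp_one_iff_integrable] at this
  exact this.congr (Filter.Eventually.of_forall fun ω => by simp [mul_comm])

/-- Helper: if E[Z|m] = 0 a.e., Y is m-strongly-measurable, and Z, Y are L2, then ∫ Z·Y = 0. -/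
lemma integral_mul_eq_zero_of_condexp_zero {Ω : Type*} {m m0 : MeasurableSpace Ω}
    {P : Measure Ω} [IsProbabilityMeasure P] (hm : m ≤ m0)
    {Z Y : Ω → ℝ} (hZ : MemLp Z 2 P) (hY : MemLp Y 2 P)
    (hYm : StronglyMeasurable[m] Y)
    (hcond : P[Z | m] =ᵐ[P] 0) :
    ∫ ω, Z ω * Y ω ∂P = 0 := by
  have hZi : Integrable Z P := hZ.integrable (by norm_num)
  have hYZ : Integrable (Y * Z) P := by
    have := l2_mul_integrable hY hZ
    exact this.congr (Filter.Eventually.of_forall fun ω => rfl)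
  have hpull : P[Y * Z | m] =ᵐ[P] Y * P[Z | m] :=
    condExp_mul_of_stronglyMeasurable_left hYm hYZ hZi
  have h0 : P[Y * Z | m] =ᵐ[P] 0 := by
    refine hpull.trans ?_
    filter_upwards [hcond] with ω hω
    simp [Pi.mul_apply, hω]
  calc ∫ ω, Z ω * Y ω ∂P = ∫ ω, (Y * Z) ω ∂P := by
        simp only [Pi.mul_apply]; congr 1; ext ω; ring
    _ = ∫ ω, (P[Y * Z | m]) ω ∂P := (integral_condExp hm).symm
    _ = 0 := by rw [integral_congr_ae h0]; simp

theorem stmt6 {Ω : Type*} [MeasurableSpace Ω] (P : Measure Ω) [IsProbabilityMeasure P]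
    (X : Ω → ℝ × ℝ) (hX : Measurable X)
    (f : ℝ × ℝ → ℝ) (c₁ c₂ : ℝ) (hc₁ : 0 < c₁) (hc₁₂ : c₁ ≤ c₂)
    (hdens : Measure.map X P =
      (volume : Measure (ℝ × ℝ)).withDensity (fun x => ENNReal.ofReal (f x)))
    (hfb : ∀ x ∈ Set.Icc ((0 : ℝ), (0 : ℝ)) (1, 1), c₁ ≤ f x ∧ f x ≤ c₂)
    (hfout : ∀ x ∉ Set.Icc ((0 : ℝ), (0 : ℝ)) (1, 1), f x = 0)
    (g h : ℝ → ℝ) (hgm : Measurable g) (hhm : Measurable h)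
    (hgL2 : MemLp (fun ω => g (X ω).1) 2 P) (hhL2 : MemLp (fun ω => h (X ω).2) 2 P)
    (ν₀ : ℝ) (ν₁ ν₂ : ℝ → ℝ) (ν₁₂ : ℝ × ℝ → ℝ)
    (hν₁m : Measurable ν₁) (hν₂m : Measurable ν₂) (hν₁₂m : Measurable ν₁₂)
    (hν₁L2 : MemLp (fun ω => ν₁ (X ω).1) 2 P)
    (hν₂L2 : MemLp (fun ω => ν₂ (X ω).2) 2 P)
    (hν₁₂L2 : MemLp (fun ω => ν₁₂ (X ω)) 2 P)
    (hdecomp : ∀ᵐ ω ∂P,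
      g (X ω).1 + h (X ω).2 = ν₀ + ν₁ (X ω).1 + ν₂ (X ω).2 + ν₁₂ (X ω))
    (hν₁mean : ∫ ω, ν₁ (X ω).1 ∂P = 0)
    (hν₂mean : ∫ ω, ν₂ (X ω).2 ∂P = 0)
    (hν₁₂mean : ∫ ω, ν₁₂ (X ω) ∂P = 0)
    (hν₁₂c1 : P[(fun ω => ν₁₂ (X ω)) |
        MeasurableSpace.comap (fun ω => (X ω).1) inferInstance] =ᵐ[P] 0)
    (hν₁₂c2 : P[(fun ω => ν₁₂ (X ω)) |
        MeasurableSpace.comap (fun ω => (X ω).2) inferInstance] =ᵐ[P] 0) :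
    (fun ω => ν₁₂ (X ω)) =ᵐ[P] 0 := by
  have hZL2 : MemLp (fun ω => ν₁₂ (X ω)) 2 P := hν₁₂L2
  have hZi : Integrable (fun ω => ν₁₂ (X ω)) P := hZL2.integrable (by norm_num)
  have hX1 : Measurable fun ω => (X ω).1 := hX.fst
  have hX2 : Measurable fun ω => (X ω).2 := hX.snd
  have hm1 : MeasurableSpace.comap (fun ω => (X ω).1) inferInstance
      ≤ ‹MeasurableSpace Ω› := measurable_iff_comap_le.mp hX1
  have hm2 : MeasurableSpace.comap (fun ω => (X ω).2) inferInstance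
      ≤ ‹MeasurableSpace Ω› := measurable_iff_comap_le.mp hX2
  have hX1m1 : @Measurable Ω ℝ
      (MeasurableSpace.comap (fun ω => (X ω).1) inferInstance) _
      (fun ω => (X ω).1) := Measurable.of_comap_le le_rfl
  have hX2m2 : @Measurable Ω ℝ
      (MeasurableSpace.comap (fun ω => (X ω).2) inferInstance) _
      (fun ω => (X ω).2) := Measurable.of_comap_le le_rfl
  have key1 : ∀ φ : ℝ → ℝ, Measurable φ → MemLp (fun ω => φ (X ω).1) 2 P →
      ∫ ω, ν₁₂ (X ω) * φ (X ω).1 ∂P = 0 := by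
    intro φ hφ hφL2
    exact integral_mul_eq_zero_of_condexp_zero hm1 hZL2 hφL2
      ((hφ.comp hX1m1).stronglyMeasurable) hν₁₂c1
  have key2 : ∀ φ : ℝ → ℝ, Measurable φ → MemLp (fun ω => φ (X ω).2) 2 P →
      ∫ ω, ν₁₂ (X ω) * φ (X ω).2 ∂P = 0 := by
    intro φ hφ hφL2
    exact integral_mul_eq_zero_of_condexp_zero hm2 hZL2 hφL2
      ((hφ.comp hX2m2).stronglyMeasurable) hν₁₂c2
  have hg0 : ∫ ω, ν₁₂ (X ω) * g (X ω).1 ∂P = 0 := key1 g hgm hgL2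
  have hh0 : ∫ ω, ν₁₂ (X ω) * h (X ω).2 ∂P = 0 := key2 h hhm hhL2
  have hν₁0 : ∫ ω, ν₁₂ (X ω) * ν₁ (X ω).1 ∂P = 0 := key1 ν₁ hν₁m hν₁L2
  have hν₂0 : ∫ ω, ν₁₂ (X ω) * ν₂ (X ω).2 ∂P = 0 := key2 ν₂ hν₂m hν₂L2
  have hae : ∀ᵐ ω ∂P, ν₁₂ (X ω) * ν₁₂ (X ω) =
      ν₁₂ (X ω) * g (X ω).1 + ν₁₂ (X ω) * h (X ω).2 - ν₀ * ν₁₂ (X ω)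
        - ν₁₂ (X ω) * ν₁ (X ω).1 - ν₁₂ (X ω) * ν₂ (X ω).2 := by
    filter_upwards [hdecomp] with ω hω
    linear_combination (ν₁₂ (X ω)) * hω.symm
  have hiZg : Integrable (fun ω => ν₁₂ (X ω) * g (X ω).1) P := l2_mul_integrable hZL2 hgL2
  have hiZh : Integrable (fun ω => ν₁₂ (X ω) * h (X ω).2) P := l2_mul_integrable hZL2 hhL2
  have hiZ1 : Integrable (fun ω => ν₁₂ (X ω) * ν₁ (X ω).1) P := l2_mul_integrable hZL2 hν₁L2
  have hiZ2 : Integrable (fun ω => ν₁₂ (X ω) * ν₂ (X ω).2) P := l2_mul_integrable hZL2 hν₂L2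
  have hiZc : Integrable (fun ω => ν₀ * ν₁₂ (X ω)) P := hZi.const_mul ν₀
  have hiA : Integrable (fun ω => ν₁₂ (X ω) * g (X ω).1 + ν₁₂ (X ω) * h (X ω).2) P :=
    hiZg.add hiZh
  have hiB : Integrable (fun ω => ν₁₂ (X ω) * g (X ω).1 + ν₁₂ (X ω) * h (X ω).2
      - ν₀ * ν₁₂ (X ω)) P := hiA.sub hiZc
  have hiC : Integrable (fun ω => ν₁₂ (X ω) * g (X ω).1 + ν₁₂ (X ω) * h (X ω).2
      - ν₀ * ν₁₂ (X ω) - ν₁₂ (X ω) * ν₁ (X ω).1) P := hiB.sub hiZ1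
  have hintZ2 : ∫ ω, ν₁₂ (X ω) * ν₁₂ (X ω) ∂P = 0 := by
    rw [integral_congr_ae hae, integral_sub hiC hiZ2, integral_sub hiB hiZ1,
        integral_sub hiA hiZc, integral_add hiZg hiZh, integral_const_mul,
        hg0, hh0, hν₁0, hν₂0, hν₁₂mean]
    ring
  have hZ2i : Integrable (fun ω => ν₁₂ (X ω) * ν₁₂ (X ω)) P := l2_mul_integrable hZL2 hZL2
  have h0 : (fun ω => ν₁₂ (X ω) * ν₁₂ (X ω)) =ᵐ[P] 0 :=
    (integral_eq_zero_iff_of_nonneg_ae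
      (Filter.Eventually.of_forall fun ω => mul_self_nonneg _) hZ2i).mp hintZ2
  filter_upwards [h0] with ω hω
  have : ν₁₂ (X ω) * ν₁₂ (X ω) = 0 := hω
  have hz : ν₁₂ (X ω) = 0 := by nlinarith [this]
  simpa using hz
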